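/- TOAD reduces to BH: if all deadlines are d_i = m (so C_t = {1,...,t} for each t ≤ m), β is the identity, and A_i = 1/m for all i, then the TOAD rejection set at stage m equals the Benjamini–Hochberg rejection set at level α applied to P_1,...,P_m. -/
import Mathlib


open Finset Classical

/-- The set of "active" hypothesis indices at stage `t` (indices `i ≤ t`
whose deadline `d i` has not yet passed). -/
noncomputable def toadC (d : ℕ → ℕ) (t : ℕ) : Finset ℕ :=
  (Finset.Icc 1 t).filter (fun i => t ≤ d i)

/-- The TOAD rejection set at each stage: save old rejections
`Rold = R_{t-1} \ C_t`, take the step-up index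
`s = max{j ≤ |C_t| : j ≤ #{i ∈ C_t : P_i ≤ α·β(j+|Rold|)·A_i}}`, and reject
`Rold ∪ {i ∈ C_t : P_i ≤ α·β(s+|Rold|)·A_i}` (the condition
`P_i ≤ thr·A_i` encodes `W_i = P_i/A_i ≤ thr`, with `W_i = ∞` when `A_i = 0`
since p-values are strictly positive). -/
noncomputable def toadR (d : ℕ → ℕ) (A P : ℕ → ℝ) (α : ℝ) (β : ℕ → ℝ) : ℕ → Finset ℕ
  | 0 => ∅
  | t + 1 =>
    let C := toadC d (t + 1)
    let Rold := toadR d A P α β t \ C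
    let s := Nat.findGreatest
      (fun j => j ≤ (C.filter (fun i => P i ≤ α * β (j + Rold.card) * A i)).card) C.card
    Rold ∪ C.filter (fun i => P i ≤ α * β (s + Rold.card) * A i)


lemma toadR_subset (d : ℕ → ℕ) (A P : ℕ → ℝ) (α : ℝ) (β : ℕ → ℝ) :
    ∀ t, toadR d A P α β t ⊆ Finset.Icc 1 t
  | 0 => by simp [toadR]
  | t + 1 => by
    intro i hi
    simp only [toadR, Finset.mem_union] at hi
    rcases hi with h | h
    · exact Finset.Icc_subset_Icc_right (Nat.le_succ t)
        (toadR_subset d A P α β t (Finset.mem_sdiff.1 h).1)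
    · exact Finset.mem_of_mem_filter i (Finset.mem_filter.1 h).1

/-- TOAD reduces to Benjamini–Hochberg: if all deadlines are `d_i = m`
(so every hypothesis stays active through stage `m`), `β` is the identity,
and `A_i = 1/m`, then the TOAD rejection set at stage `m` is the BH rejection
set at level `α`: the set `{i : P_i ≤ αk/m}` where
`k = max{j ≤ m : j ≤ #{i : P_i ≤ αj/m}}` (i.e. `k = max{j : P_(j) ≤ αj/m}`). -/
theorem toad_eq_bh
    (m : ℕ) (hm : 0 < m)
    (P : ℕ → ℝ) (hP : ∀ i, 0 < P i)
    (α : ℝ) (hα : α ∈ Set.Ioo (0 : ℝ) 1)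
    (k : ℕ)
    (hk : k = Nat.findGreatest
      (fun j => j ≤ ((Finset.Icc 1 m).filter (fun i => P i ≤ α * j / m)).card) m) :
    toadR (fun _ => m) (fun _ => (1 : ℝ) / m) P α (fun n => (n : ℝ)) m
      = (Finset.Icc 1 m).filter (fun i => P i ≤ α * k / m) := by
  
  obtain ⟨t, rfl⟩ := Nat.exists_eq_succ_of_ne_zero hm.ne'
  have hC : toadC (fun _ => t + 1) (t + 1) = Finset.Icc 1 (t + 1) := by
    simp [toadC]
  have hRold : toadR (fun _ => t + 1) (fun _ => (1 : ℝ) / ((t + 1 : ℕ) : ℝ)) P α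
      (fun n => (n : ℝ)) t \ Finset.Icc 1 (t + 1) = ∅ := by
    rw [Finset.sdiff_eq_empty_iff_subset]
    exact (toadR_subset _ _ _ _ _ t).trans (Finset.Icc_subset_Icc_right (Nat.le_succ t))
  rw [toadR]
  simp only [hC, hRold, Finset.card_empty, Nat.add_zero, Finset.empty_union, Nat.card_Icc,
    Nat.add_sub_cancel]
  simp only [mul_one_div]
  rw [hk]
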